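/- Let L be a real-valued integrable random variable and β ∈ (0,1), and let v_β = inf{u ∈ ℝ : P(L ≥ u) ≤ β}. If P(L ≥ v_β) = β, then v_β + (1/β) E[(L − v_β)^+] = E[L | L ≥ v_β]; consequently the Conditional Value at Risk admits the variational representation C_β = E[L | L ≥ v_β] = inf_{u ∈ ℝ} { u + (1/β) E[(L − u)^+] }. -/

import Mathlib

open MeasureTheory

/-- **Variational representation of Conditional Value at Risk.**
Let `L` be integrable, `β ∈ (0,1)`, and `v_β = inf {u : P(L ≥ u) ≤ β}`.
If `P(L ≥ v_β) = β`, then `v_β + β⁻¹ E[(L - v_β)⁺] = E[L ∣ L ≥ v_β]`, and the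
Conditional Value at Risk `C_β = E[L ∣ L ≥ v_β]` equals
`inf_{u ∈ ℝ} { u + β⁻¹ E[(L - u)⁺] }`. -/
theorem cvar_variational_representation
    {Ω : Type*} [MeasurableSpace Ω] (μ : Measure Ω) [IsProbabilityMeasure μ]
    (L : Ω → ℝ) (hLm : Measurable L) (hL : Integrable L μ)
    (β : ℝ) (hβ : β ∈ Set.Ioo (0 : ℝ) 1)
    (v : ℝ) (hv : v = sInf {u : ℝ | (μ {ω | u ≤ L ω}).toReal ≤ β})
    (hPv : (μ {ω | v ≤ L ω}).toReal = β) :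
    v + β⁻¹ * ∫ ω, max (L ω - v) 0 ∂μ
      = (∫ ω in {ω | v ≤ L ω}, L ω ∂μ) / (μ {ω | v ≤ L ω}).toReal
    ∧ (∫ ω in {ω | v ≤ L ω}, L ω ∂μ) / (μ {ω | v ≤ L ω}).toReal
      = ⨅ u : ℝ, (u + β⁻¹ * ∫ ω, max (L ω - u) 0 ∂μ) := by
  obtain ⟨hβ0, hβ1⟩ := hβ
  set S : Set Ω := {ω | v ≤ L ω} with hSdef
  have hS : MeasurableSet S := measurableSet_le measurable_const hLm
  have hLS : IntegrableOn L S μ := hL.integrableOn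
  have hmax : ∀ u : ℝ, Integrable (fun ω => max (L ω - u) 0) μ := fun u =>
    (hL.sub (integrable_const u)).pos_part
  -- Step A: ∫ max(L - v) = ∫_S L - v * β
  have hA : ∫ ω, max (L ω - v) 0 ∂μ = (∫ ω in S, L ω ∂μ) - v * β := by
    have h1 : (fun ω => max (L ω - v) 0) = S.indicator (fun ω => L ω - v) := by
      funext ω
      by_cases h : v ≤ L ω
      · rw [Set.indicator_of_mem (show ω ∈ S from h)]
        exact max_eq_left (sub_nonneg.mpr h)
      · rw [Set.indicator_of_notMem (show ω ∉ S from h)]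
        exact max_eq_right (sub_nonpos.mpr (le_of_not_ge h))
    rw [h1, integral_indicator hS,
      integral_sub hLS ((integrable_const v).integrableOn),
      setIntegral_const, measureReal_def, hPv, smul_eq_mul]
    ring
  have hβne : β ≠ 0 := ne_of_gt hβ0
  have hfirst : v + β⁻¹ * ∫ ω, max (L ω - v) 0 ∂μ
      = (∫ ω in S, L ω ∂μ) / (μ S).toReal := by
    rw [hA, hPv]
    field_simp
    ring
  -- Key inequality: v minimizes u ↦ u + β⁻¹ ∫ (L-u)⁺
  have hkey : ∀ u : ℝ, v + β⁻¹ * ∫ ω, max (L ω - v) 0 ∂μ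
      ≤ u + β⁻¹ * ∫ ω, max (L ω - u) 0 ∂μ := by
    intro u
    have hpt : ∀ ω, max (L ω - v) 0 + S.indicator (fun _ => v - u) ω
        ≤ max (L ω - u) 0 := by
      intro ω
      by_cases h : v ≤ L ω
      · rw [Set.indicator_of_mem (show ω ∈ S from h),
          max_eq_left (sub_nonneg.mpr h)]
        have := le_max_left (L ω - u) (0 : ℝ)
        linarith
      · rw [Set.indicator_of_notMem (show ω ∉ S from h),
          max_eq_right (sub_nonpos.mpr (le_of_not_ge h))]
        have := le_max_right (L ω - u) (0 : ℝ)
        linarith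
    have hind : Integrable (S.indicator (fun _ => v - u)) μ :=
      (integrable_const (v - u)).indicator hS
    have hintle : ∫ ω, (max (L ω - v) 0 + S.indicator (fun _ => v - u) ω) ∂μ
        ≤ ∫ ω, max (L ω - u) 0 ∂μ :=
      integral_mono ((hmax v).add hind) (hmax u) hpt
    rw [integral_add (hmax v) hind, integral_indicator_const _ hS, measureReal_def, hPv,
      smul_eq_mul] at hintle
    have h2 : β⁻¹ * (∫ ω, max (L ω - v) 0 ∂μ + β * (v - u))
        ≤ β⁻¹ * ∫ ω, max (L ω - u) 0 ∂μ :=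
      mul_le_mul_of_nonneg_left hintle (le_of_lt (inv_pos.mpr hβ0))
    have h3 : β⁻¹ * β = 1 := inv_mul_cancel₀ hβne
    have h4 : β⁻¹ * (β * (v - u)) = v - u := by rw [← mul_assoc, h3, one_mul]
    rw [mul_add, h4] at h2
    linarith
  refine ⟨hfirst, ?_⟩
  rw [← hfirst]
  refine le_antisymm (le_ciInf hkey) (ciInf_le ?_ v)
  exact ⟨v + β⁻¹ * ∫ ω, max (L ω - v) 0 ∂μ, by rintro x ⟨u, rfl⟩; exact hkey u⟩
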